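/- For every integer r ≥ 1 and every fixed integer m ≥ 2, the sum over all weakly decreasing tuples m ≥ n_1 ≥ n_2 ≥ ⋯ ≥ n_r ≥ 1 of 1/(n_1 n_2 ⋯ n_r) is strictly less than m. -/
import Mathlib

open scoped BigOperators

noncomputable instance (r : ℕ) : DecidablePred (fun n : Fin r → ℕ => Antitone n) :=
  fun _ => Classical.dec _

noncomputable def Tset (r m : ℕ) : Finset (Fin r → ℕ) :=
  (Fintype.piFinset fun _ : Fin r => Finset.Icc 1 m).filter (fun n => Antitone n)

lemma mem_Tset {r m : ℕ} {n : Fin r → ℕ} :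
    n ∈ Tset r m ↔ Antitone n ∧ ∀ i, 1 ≤ n i ∧ n i ≤ m := by
  simp only [Tset, Finset.mem_filter, Fintype.mem_piFinset, Finset.mem_Icc]
  tauto

noncomputable def Ssum (r m : ℕ) : ℝ :=
  ∑ n ∈ Tset r m, (1 : ℝ) / ∏ i, (n i : ℝ)

lemma antitone_cons {r : ℕ} (k : ℕ) (n : Fin r → ℕ) :
    Antitone (Fin.cons k n : Fin (r+1) → ℕ) ↔ Antitone n ∧ ∀ i, n i ≤ k := by
  constructor
  · intro h
    refine ⟨fun i j hij => ?_, fun i => ?_⟩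
    · have := h (Fin.succ_le_succ_iff.mpr hij)
      simpa using this
    · have := h (Fin.zero_le i.succ)
      simpa using this
  · rintro ⟨h1, h2⟩ i j hij
    induction j using Fin.cases with
    | zero =>
        have : i = 0 := le_antisymm hij (Fin.zero_le i)
        subst this; exact le_rfl
    | succ j' =>
        induction i using Fin.cases with
        | zero => simpa using h2 j'
        | succ i' =>
            have : i' ≤ j' := Fin.succ_le_succ_iff.mp hij
            simpa using h1 this

lemma Ssum_zero (m : ℕ) : Ssum 0 m = 1 := by
  have hT : Tset 0 m = Finset.univ := by
    ext n
    simp only [Finset.mem_univ, iff_true, mem_Tset]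
    exact ⟨fun i _ _ => Fin.elim0 i, fun i => Fin.elim0 i⟩
  simp [Ssum, hT]

lemma Ssum_rec (r m : ℕ) :
    Ssum (r+1) m = ∑ k ∈ Finset.Icc 1 m, (1 / (k : ℝ)) * Ssum r k := by
  simp only [Ssum, Finset.mul_sum]
  rw [Finset.sum_sigma']
  refine (Finset.sum_nbij' (fun a => Fin.cons a.1 a.2) (fun f => ⟨f 0, Fin.tail f⟩)
    ?_ ?_ ?_ ?_ ?_).symm
  · rintro ⟨k, n⟩ ha
    rw [Finset.mem_sigma] at ha
    obtain ⟨hk, hn⟩ := ha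
    rw [Finset.mem_Icc] at hk
    rw [mem_Tset] at hn
    rw [mem_Tset]
    constructor
    · exact (antitone_cons k n).mpr ⟨hn.1, fun i => (hn.2 i).2⟩
    · intro i
      induction i using Fin.cases with
      | zero => simpa using hk
      | succ i' =>
          simp only [Fin.cons_succ]
          exact ⟨(hn.2 i').1, le_trans (hn.2 i').2 hk.2⟩
  · intro f hf
    rw [mem_Tset] at hf
    rw [Finset.mem_sigma, Finset.mem_Icc, mem_Tset]
    refine ⟨⟨(hf.2 0).1, (hf.2 0).2⟩, ?_, ?_⟩
    · intro i j hij
      exact hf.1 (Fin.succ_le_succ_iff.mpr hij)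
    · intro i
      exact ⟨(hf.2 i.succ).1, hf.1 (Fin.zero_le i.succ)⟩
  · rintro ⟨k, n⟩ _
    simp
  · intro f _
    simp [Fin.cons_self_tail]
  · rintro ⟨k, n⟩ ha
    rw [Finset.mem_sigma, Finset.mem_Icc] at ha
    have hk : (k : ℝ) ≠ 0 := by
      have := ha.1.1
      positivity
    rw [Fin.prod_univ_succ]
    simp only [Fin.cons_zero, Fin.cons_succ]
    rw [one_div, one_div, one_div, mul_inv]

lemma Ssum_one (r : ℕ) : Ssum r 1 = 1 := by
  induction r with
  | zero => exact Ssum_zero 1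
  | succ r ih =>
      rw [Ssum_rec]
      simp [ih]

lemma Ssum_lt (r m : ℕ) (hm : 2 ≤ m) : Ssum r m < m := by
  induction r generalizing m with
  | zero =>
      rw [Ssum_zero]
      exact_mod_cast Nat.lt_of_lt_of_le one_lt_two hm
  | succ r ih =>
      rw [Ssum_rec]
      have hsplit : Finset.Icc 1 m = insert 1 (Finset.Icc 2 m) := by
        ext x
        simp only [Finset.mem_Icc, Finset.mem_insert]
        omega
      rw [hsplit, Finset.sum_insert (by simp)]
      have h1 : (1 / ((1:ℕ) : ℝ)) * Ssum r 1 = 1 := by simp [Ssum_one]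
      rw [h1]
      have hlt : ∑ k ∈ Finset.Icc 2 m, (1 / (k : ℝ)) * Ssum r k
          < ∑ k ∈ Finset.Icc 2 m, 1 := by
        apply Finset.sum_lt_sum_of_nonempty
        · exact ⟨2, by simp [Finset.mem_Icc, hm]⟩
        · intro k hk
          rw [Finset.mem_Icc] at hk
          have hk2 : 2 ≤ k := hk.1
          have hkpos : (0:ℝ) < 1 / (k:ℝ) := by positivity
          calc (1 / (k : ℝ)) * Ssum r k < (1 / (k : ℝ)) * k :=
                by exact mul_lt_mul_of_pos_left (ih k hk2) hkpos
            _ = 1 := by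
                field_simp
      have hcard : ∑ k ∈ Finset.Icc 2 m, (1:ℝ) = (m - 1 : ℕ) := by
        rw [Finset.sum_const, Nat.card_Icc]
        simp
      have : (1:ℝ) + ∑ k ∈ Finset.Icc 2 m, (1 / (k : ℝ)) * Ssum r k
          < 1 + ((m - 1 : ℕ) : ℝ) := by
        rw [← hcard]
        linarith
      refine this.trans_le ?_
      have : ((m - 1 : ℕ) : ℝ) = (m : ℝ) - 1 := by
        have : 1 ≤ m := by omega
        push_cast [Nat.cast_sub this]
        ring
      rw [this]; linarith

theorem stmt0 (r m : ℕ) (hr : 1 ≤ r) (hm : 2 ≤ m) :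
    (∑' n : {n : Fin r → ℕ // Antitone n ∧ ∀ i, 1 ≤ n i ∧ n i ≤ m},
      (1 : ℝ) / ∏ i, (n.1 i : ℝ)) < m := by
  have h1 : (∑' n : {n : Fin r → ℕ // Antitone n ∧ ∀ i, 1 ≤ n i ∧ n i ≤ m},
      (1 : ℝ) / ∏ i, (n.1 i : ℝ)) = Ssum r m := by
    rw [Ssum, ← Finset.tsum_subtype (Tset r m) (fun n => (1 : ℝ) / ∏ i, (n i : ℝ))]
    rw [← Equiv.tsum_eq
      (Equiv.subtypeEquivRight (fun n : Fin r → ℕ =>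
        (mem_Tset : n ∈ Tset r m ↔ Antitone n ∧ ∀ i, 1 ≤ n i ∧ n i ≤ m)))
      (fun n => (1 : ℝ) / ∏ i, (n.1 i : ℝ))]
    exact tsum_congr fun x => rfl
  rw [h1]
  exact Ssum_lt r m hm
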